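/- Let F be a group with normal subgroups R₁,…,R_n indexed by ⟨n⟩ = {1,…,n}, and let k ≥ 2. Then for every A ⊆ ⟨n⟩: (a) D_k(F;A) is a normal subgroup of F contained in K_A = ⋂_{i∈A}R_i; and (b) for all A, B ⊆ ⟨n⟩, if x, x' ∈ K_A with x·x'⁻¹ ∈ D_k(F;A) and y, y' ∈ K_B with y·y'⁻¹ ∈ D_k(F;B), then [x,y]·[x',y']⁻¹ ∈ D_k(F;A∪B). (Hence the commutator induces well-defined functions h̃ : K_A/D_k(F;A) × K_B/D_k(F;B) → K_{A∪B}/D_k(F;A∪B).) -/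

import Mathlib

/-- Iterated commutator `⁅H₁, ⁅H₂, …, ⁅H_{k-1}, H_k⁆…⁆⁆` of a list of subgroups. -/
def iterCommutator {F : Type*} [Group F] : List (Subgroup F) → Subgroup F
  | [] => ⊥
  | [H] => H
  | H :: t => ⁅H, iterCommutator t⁆

/-- `K_B = ⋂_{i∈B} R_i`, with the convention `K_∅ = F`. -/
def adInf {F : Type*} [Group F] {n : ℕ} (R : Fin n → Subgroup F) (B : Finset (Fin n)) :
    Subgroup F :=
  ⨅ i ∈ B, R i

/-- `D_k(F;A)`: the product (join) of the iterated commutator subgroups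
`⁅K_{A₁},⁅K_{A₂},…,⁅K_{A_{k-1}},K_{A_k}⁆…⁆⁆` over all `k`-tuples `(A₁,…,A_k)` of
(possibly empty) subsets with `A₁ ∪ ⋯ ∪ A_k = A`. -/
def adD {F : Type*} [Group F] {n : ℕ} (R : Fin n → Subgroup F) (k : ℕ) (A : Finset (Fin n)) :
    Subgroup F :=
  ⨆ (c : Fin k → Finset (Fin n)) (_ : Finset.univ.sup c = A),
    iterCommutator (List.ofFn fun i => adInf R (c i))

open scoped commutatorElement

section Aux
variable {F : Type*} [Group F]

/-- sup of normal subgroups is normal -/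
theorem myNormal_iSup {ι : Sort*} (S : ι → Subgroup F) (h : ∀ i, (S i).Normal) :
    (⨆ i, S i).Normal := by
  constructor
  intro x hx g
  refine Subgroup.iSup_induction S (C := fun y => g * y * g⁻¹ ∈ ⨆ i, S i) hx
    (fun i y hy => le_iSup S i ((h i).conj_mem y hy g)) (by simpa using one_mem (⨆ i, S i)) ?_
  intro a b ha hb
  have : g * (a * b) * g⁻¹ = (g * a * g⁻¹) * (g * b * g⁻¹) := by group
  rw [this]; exact mul_mem ha hb

theorem myCommutator_iSup_le {ι : Sort*} (H : Subgroup F) (S : ι → Subgroup F)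
    (N : Subgroup F) [hN : N.Normal] (h : ∀ i, ⁅H, S i⁆ ≤ N) : ⁅H, ⨆ i, S i⁆ ≤ N := by
  rw [Subgroup.commutator_le]
  intro g₁ hg₁ g₂ hg₂
  refine Subgroup.iSup_induction S (C := fun y => ⁅g₁, y⁆ ∈ N) hg₂
    (fun i y hy => (Subgroup.commutator_le.mp (h i)) g₁ hg₁ y hy) (by simpa using one_mem N) ?_
  intro a b ha hb
  have : ⁅g₁, a * b⁆ = ⁅g₁, a⁆ * (a * ⁅g₁, b⁆ * a⁻¹) := by
    simp only [commutatorElement_def]; group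
  rw [this]
  exact mul_mem ha (hN.conj_mem _ hb a)

theorem iterCommutator_cons {X : Subgroup F} {t : List (Subgroup F)} (ht : t ≠ []) :
    iterCommutator (X :: t) = ⁅X, iterCommutator t⁆ := by
  cases t with
  | nil => exact absurd rfl ht
  | cons a t' => rfl

theorem iterCommutator_normal : ∀ (L : List (Subgroup F)), (∀ X ∈ L, X.Normal) →
    (iterCommutator L).Normal
  | [], _ => by rw [iterCommutator]; infer_instance
  | [X], h => h X (by simp)
  | X :: a :: t, h => by
    rw [iterCommutator_cons (by simp)]
    have h1 : X.Normal := h X (by simp)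
    have h2 : (iterCommutator (a :: t)).Normal :=
      iterCommutator_normal (a :: t) (fun Y hY => h Y (List.mem_cons_of_mem _ hY))
    exact Subgroup.commutator_normal X _

theorem iterCommutator_le_of_mem : ∀ (L : List (Subgroup F)), (∀ X ∈ L, X.Normal) →
    ∀ X ∈ L, iterCommutator L ≤ X
  | [], _, X, hX => by simp at hX
  | [Y], h, X, hX => by simp at hX; subst hX; exact le_rfl
  | Y :: a :: t, h, X, hX => by
    rw [iterCommutator_cons (by simp)]
    have h1 : Y.Normal := h Y (by simp)
    have h2 : (iterCommutator (a :: t)).Normal :=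
      iterCommutator_normal (a :: t) (fun Z hZ => h Z (List.mem_cons_of_mem _ hZ))
    rcases List.mem_cons.mp hX with rfl | hX
    · exact Subgroup.commutator_le_left _ _
    · exact (Subgroup.commutator_le_right _ _).trans
        (iterCommutator_le_of_mem (a :: t) (fun Z hZ => h Z (List.mem_cons_of_mem _ hZ)) X hX)

theorem iterCommutator_mono : ∀ {L M : List (Subgroup F)}, List.Forall₂ (· ≤ ·) L M →
    iterCommutator L ≤ iterCommutator M
  | [], [], _ => le_rfl
  | _, _, List.Forall₂.cons (a := X) (b := Y) (l₁ := t) (l₂ := s) hXY ht => by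
    cases ht with
    | nil => exact hXY
    | cons h' ht' =>
      exact Subgroup.commutator_mono hXY (iterCommutator_mono (List.Forall₂.cons h' ht'))

end Aux


section B
variable {F : Type*} [Group F]

theorem myThreeSubgroups {A B C N : Subgroup F} [N.Normal]
    (h1 : ⁅⁅B, C⁆, A⁆ ≤ N) (h2 : ⁅⁅C, A⁆, B⁆ ≤ N) : ⁅⁅A, B⁆, C⁆ ≤ N := by
  set f := QuotientGroup.mk' N with hf
  have key : ∀ X Y Z : Subgroup F, ⁅⁅X, Y⁆, Z⁆ ≤ N ↔
      ⁅⁅X.map f, Y.map f⁆, Z.map f⁆ = ⊥ := by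
    intro X Y Z
    rw [← Subgroup.map_commutator, ← Subgroup.map_commutator, Subgroup.map_eq_bot_iff,
      QuotientGroup.ker_mk']
  rw [key]
  exact Subgroup.commutator_commutator_eq_bot_of_rotate ((key B C A).mp h1) ((key C A B).mp h2)

variable {n : ℕ} (R : Fin n → Subgroup F)

theorem mem_adInf {B : Finset (Fin n)} {x : F} : x ∈ adInf R B ↔ ∀ i ∈ B, x ∈ R i := by
  simp [adInf, Subgroup.mem_iInf]

theorem adInf_normal (hR : ∀ i, (R i).Normal) (B : Finset (Fin n)) : (adInf R B).Normal := by
  constructor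
  intro x hx g
  rw [mem_adInf] at hx ⊢
  exact fun i hi => (hR i).conj_mem x (hx i hi) g

theorem adInf_anti {B C : Finset (Fin n)} (h : B ⊆ C) : adInf R C ≤ adInf R B := by
  intro x hx
  rw [mem_adInf] at hx ⊢
  exact fun i hi => hx i (h hi)

theorem adInf_union (B C : Finset (Fin n)) : adInf R (B ∪ C) = adInf R B ⊓ adInf R C := by
  ext x
  simp only [Subgroup.mem_inf, mem_adInf, Finset.mem_union]
  constructor
  · intro h; exact ⟨fun i hi => h i (Or.inl hi), fun i hi => h i (Or.inr hi)⟩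
  · rintro ⟨h1, h2⟩ i (hi | hi); exacts [h1 i hi, h2 i hi]

theorem adInf_sup {k : ℕ} (c : Fin k → Finset (Fin n)) :
    adInf R (Finset.univ.sup c) = ⨅ i, adInf R (c i) := by
  ext x
  simp only [Subgroup.mem_iInf, mem_adInf]
  constructor
  · intro h i j hj
    exact h j (Finset.le_sup (f := c) (Finset.mem_univ i) hj)
  · intro h j hj
    rw [Finset.mem_sup] at hj
    obtain ⟨i, _, hji⟩ := hj
    exact h i j hji

end B
section D
variable {F : Type*} [Group F]

theorem myForall₂_set {α : Type*} {Rel : α → α → Prop} :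
    ∀ {l m : List α}, List.Forall₂ Rel l m → ∀ (i : ℕ) {v w : α}, Rel v w →
      List.Forall₂ Rel (l.set i v) (m.set i w)
  | [], [], _, _, _, _, _ => List.Forall₂.nil
  | _, _, List.Forall₂.cons h t, 0, v, w, hvw => List.Forall₂.cons hvw t
  | _, _, List.Forall₂.cons h t, (i+1), v, w, hvw =>
      List.Forall₂.cons h (myForall₂_set t i hvw)

theorem myOfFn_set {α : Type*} {k : ℕ} (c : Fin k → α) (j : Fin k) (v : α) :
    (List.ofFn c).set j v = List.ofFn (Function.update c j v) := by
  apply List.ext_getElem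
  · simp
  · intro i h1 h2
    simp only [List.getElem_set, List.getElem_ofFn, Function.update]
    rw [List.length_ofFn] at h2
    by_cases hij : (⟨i, h2⟩ : Fin k) = j
    · have : (j : ℕ) = i := by rw [← hij]
      simp [this, hij]
    · have : (j : ℕ) ≠ i := by
        intro hji; exact hij (Fin.ext hji.symm)
      simp [this, hij]

/-- Core: commutator of a normal subgroup with an iterated commutator is bounded by the
sup over positions of the iterated commutators with `⁅H, ·⁆` inserted. -/
theorem comm_iterCommutator_le (H : Subgroup F) [hH : H.Normal] :
    ∀ (L : List (Subgroup F)), L ≠ [] → (∀ X ∈ L, X.Normal) →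
    ⁅H, iterCommutator L⁆ ≤
      ⨆ j : Fin L.length, iterCommutator (L.set j ⁅H, L.get j⁆)
  | [], h, _ => absurd rfl h
  | [X], _, hn => by
    have : iterCommutator [X] = X := rfl
    rw [this]
    refine le_trans ?_ (le_iSup _ (0 : Fin 1))
    exact le_of_eq rfl
  | X :: a :: t, _, hn => by
    set t' : List (Subgroup F) := a :: t with ht'
    have ht'ne : t' ≠ [] := by simp [ht']
    have hnt' : ∀ Y ∈ t', Y.Normal := fun Y hY => hn Y (List.mem_cons_of_mem _ hY)
    have hX : X.Normal := hn X (by simp)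
    have hT : (iterCommutator t').Normal := iterCommutator_normal t' hnt'
    rw [iterCommutator_cons ht'ne]
    -- goal: ⁅H, ⁅X, T⁆⁆ ≤ N where N is the sup
    set N : Subgroup F :=
      ⨆ j : Fin (X :: t').length, iterCommutator ((X :: t').set j ⁅H, (X :: t').get j⁆) with hN
    have hNnormal : N.Normal := by
      apply myNormal_iSup
      intro j
      apply iterCommutator_normal
      intro Z hZ
      rcases List.mem_or_eq_of_mem_set hZ with hZ | rfl
      · exact hn Z hZ
      · haveI := hn _ ((List.get_mem (X :: t') j))
        exact Subgroup.commutator_normal _ _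
    rw [Subgroup.commutator_comm]
    apply myThreeSubgroups (A := X) (B := iterCommutator t') (C := H)
    · -- ⁅⁅T, H⁆, X⁆ ≤ N : use IH
      rw [Subgroup.commutator_comm (iterCommutator t') H, Subgroup.commutator_comm _ X]
      have ih := comm_iterCommutator_le H t' ht'ne hnt'
      refine le_trans (Subgroup.commutator_mono le_rfl ih) ?_
      haveI : ∀ j : Fin t'.length, (iterCommutator (t'.set j ⁅H, t'.get j⁆)).Normal := by
        intro j
        apply iterCommutator_normal
        intro Z hZ
        rcases List.mem_or_eq_of_mem_set hZ with hZ | rfl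
        · exact hnt' Z hZ
        · haveI := hnt' _ ((List.get_mem t' j))
          exact Subgroup.commutator_normal _ _
      apply myCommutator_iSup_le
      intro j
      have hset : t'.set j ⁅H, t'.get j⁆ ≠ [] := by
        apply List.ne_nil_of_length_pos
        rw [List.length_set]
        exact j.pos
      have : ⁅X, iterCommutator (t'.set j ⁅H, t'.get j⁆)⁆ =
          iterCommutator (X :: t'.set j ⁅H, t'.get j⁆) :=
        (iterCommutator_cons hset).symm
      rw [this]
      refine le_trans (le_of_eq ?_) (le_iSup _ (j.succ : Fin (X :: t').length))
      rfl
    · -- ⁅⁅H, X⁆, T⁆ ≤ N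
      have h0 : ⁅⁅H, X⁆, iterCommutator t'⁆ = iterCommutator (⁅H, X⁆ :: t') :=
        (iterCommutator_cons ht'ne).symm
      rw [h0]
      refine le_trans (le_of_eq rfl)
        (le_iSup (fun j : Fin (X :: t').length =>
          iterCommutator ((X :: t').set j ⁅H, (X :: t').get j⁆)) ⟨0, Nat.succ_pos _⟩)
  termination_by L => L.length

end D
section E
variable {F : Type*} [Group F] {n : ℕ} (R : Fin n → Subgroup F)

theorem adD_normal (hR : ∀ i, (R i).Normal) (k : ℕ) (A : Finset (Fin n)) :
    (adD R k A).Normal := by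
  apply myNormal_iSup
  intro c
  apply myNormal_iSup
  intro _
  apply iterCommutator_normal
  intro X hX
  rw [List.mem_ofFn] at hX
  obtain ⟨i, rfl⟩ := hX
  exact adInf_normal R hR _

theorem le_adD {k : ℕ} {c : Fin k → Finset (Fin n)} {A : Finset (Fin n)}
    (hc : Finset.univ.sup c = A) :
    iterCommutator (List.ofFn fun i => adInf R (c i)) ≤ adD R k A :=
  le_iSup_of_le c (le_iSup_of_le hc le_rfl)

theorem adD_le_adInf (hR : ∀ i, (R i).Normal) {k : ℕ} (hk : k ≠ 0) (A : Finset (Fin n)) :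
    adD R k A ≤ adInf R A := by
  apply iSup_le
  intro c
  apply iSup_le
  intro hc
  rw [← hc, adInf_sup]
  apply le_iInf
  intro i
  apply iterCommutator_le_of_mem
  · intro X hX
    rw [List.mem_ofFn] at hX
    obtain ⟨i, rfl⟩ := hX
    exact adInf_normal R hR _
  · exact List.mem_ofFn.mpr ⟨i, rfl⟩

theorem sup_update {k : ℕ} (c : Fin k → Finset (Fin n)) (j : Fin k) (C : Finset (Fin n)) :
    Finset.univ.sup (Function.update c j (c j ∪ C)) = Finset.univ.sup c ∪ C := by
  ext x
  simp only [Finset.mem_sup, Finset.mem_union, Finset.mem_univ, true_and]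
  constructor
  · rintro ⟨i, hi⟩
    rw [Function.update_apply] at hi
    split_ifs at hi with h
    · rcases Finset.mem_union.mp hi with h' | h'
      · exact Or.inl ⟨j, h'⟩
      · exact Or.inr h'
    · exact Or.inl ⟨i, hi⟩
  · rintro (⟨i, hi⟩ | hC)
    · by_cases h : i = j
      · subst h
        exact ⟨i, by simp [Function.update_apply, Finset.mem_union, hi]⟩
      · exact ⟨i, by simp [Function.update_apply, h, hi]⟩
    · exact ⟨j, by simp [Function.update_apply, Finset.mem_union, hC]⟩

theorem comm_adInf_adD_le (hR : ∀ i, (R i).Normal) {k : ℕ} (hk : k ≠ 0)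
    (C A : Finset (Fin n)) :
    ⁅adInf R C, adD R k A⁆ ≤ adD R k (A ∪ C) := by
  haveI := adD_normal R hR k (A ∪ C)
  haveI hCn := adInf_normal R hR C
  refine myCommutator_iSup_le _ _ _ (fun c => ?_)
  refine myCommutator_iSup_le _ _ _ (fun hc => ?_)
  set L := List.ofFn fun i => adInf R (c i) with hL
  have hLne : L ≠ [] := by
    apply List.ne_nil_of_length_pos
    simp only [hL, List.length_ofFn]
    omega
  have hLn : ∀ X ∈ L, X.Normal := by
    intro X hX
    rw [hL, List.mem_ofFn] at hX
    obtain ⟨i, rfl⟩ := hX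
    exact adInf_normal R hR _
  refine le_trans (comm_iterCommutator_le (adInf R C) L hLne hLn) ?_
  apply iSup_le
  intro j
  have hjk : (j : ℕ) < k := by
    have := j.2
    simpa only [hL, List.length_ofFn] using this
  set j' : Fin k := ⟨j, hjk⟩ with hj'
  have hget : L.get j = adInf R (c j') := by
    simp [hL, List.get_ofFn]
    rfl
  -- bound the inserted commutator
  have hcomm : ⁅adInf R C, L.get j⁆ ≤ adInf R (c j' ∪ C) := by
    rw [hget, adInf_union]
    haveI := adInf_normal R hR (c j')
    exact le_inf (Subgroup.commutator_le_right _ _) (Subgroup.commutator_le_left _ _)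
  refine le_trans (iterCommutator_mono
    (myForall₂_set (List.forall₂_refl L) (j : ℕ) hcomm)) ?_
  have hset : L.set ((j : ℕ)) (adInf R (c j' ∪ C)) =
      List.ofFn fun i => adInf R (Function.update c j' (c j' ∪ C) i) := by
    refine (myOfFn_set (fun i => adInf R (c i)) j' (adInf R (c j' ∪ C))).trans ?_
    congr 1
    funext i
    by_cases h : i = j'
    · subst h; simp
    · simp [Function.update_apply, h]
  rw [hset]
  apply le_adD
  rw [sup_update, hc]

end E
section Main

theorem comm_aux1 {G : Type*} [Group G] (dd xx yy : G) (h : Commute dd yy) :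
    ⁅dd * xx, yy⁆ = dd * ⁅xx, yy⁆ * dd⁻¹ := by
  have h2 : dd⁻¹ * yy⁻¹ = yy⁻¹ * dd⁻¹ := (h.inv_left.inv_right).eq
  calc ⁅dd * xx, yy⁆ = dd * (xx * yy * xx⁻¹) * (dd⁻¹ * yy⁻¹) := by
        simp only [commutatorElement_def]; group
    _ = dd * (xx * yy * xx⁻¹) * (yy⁻¹ * dd⁻¹) := by rw [h2]
    _ = dd * ⁅xx, yy⁆ * dd⁻¹ := by simp only [commutatorElement_def]; group

theorem comm_aux2 {G : Type*} [Group G] (ee xx yy : G) (h : Commute ee xx) :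
    ⁅xx, ee * yy⁆ = ee * ⁅xx, yy⁆ * ee⁻¹ := by
  calc ⁅xx, ee * yy⁆ = (xx * ee) * (yy * xx⁻¹ * yy⁻¹ * ee⁻¹) := by
        simp only [commutatorElement_def]; group
    _ = (ee * xx) * (yy * xx⁻¹ * yy⁻¹ * ee⁻¹) := by rw [← h.eq]
    _ = ee * ⁅xx, yy⁆ * ee⁻¹ := by simp only [commutatorElement_def]; group

theorem conj_eq_self' {G : Type*} [Group G] (a z : G) (h : Commute a z) :
    a * z * a⁻¹ = z := by
  rw [h.eq, mul_assoc, mul_inv_cancel, mul_one]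


/-- For a group `F` with normal subgroups `R₁,…,R_n` and `k ≥ 2`: (a) `D_k(F;A)` is a
normal subgroup of `F` contained in `K_A = ⋂_{i∈A}R_i`; (b) the commutator map descends:
if `x ≡ x' mod D_k(F;A)` in `K_A` and `y ≡ y' mod D_k(F;B)` in `K_B`, then
`[x,y] ≡ [x',y'] mod D_k(F;A∪B)`.  Hence the commutator induces well-defined functions
`h̃ : K_A/D_k(F;A) × K_B/D_k(F;B) → K_{A∪B}/D_k(F;A∪B)`. -/
theorem adD_normal_le_and_commutator_descends {F : Type*} [Group F] {n : ℕ}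
    (R : Fin n → Subgroup F) (hR : ∀ i, (R i).Normal) (k : ℕ) (hk : 2 ≤ k) :
    (∀ A : Finset (Fin n), (adD R k A).Normal ∧ adD R k A ≤ adInf R A) ∧
    (∀ (A B : Finset (Fin n)) (x x' y y' : F),
      x ∈ adInf R A → x' ∈ adInf R A → y ∈ adInf R B → y' ∈ adInf R B →
      x * x'⁻¹ ∈ adD R k A → y * y'⁻¹ ∈ adD R k B →
      ⁅x, y⁆ * ⁅x', y'⁆⁻¹ ∈ adD R k (A ∪ B)) := by
  have hk0 : k ≠ 0 := by omega
  refine ⟨fun A => ⟨adD_normal R hR k A, adD_le_adInf R hR hk0 A⟩, ?_⟩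
  intro A B x x' y y' hx hx' hy hy' hd he
  haveI hDn : (adD R k (A ∪ B)).Normal := adD_normal R hR k (A ∪ B)
  haveI hAn := adInf_normal R hR A
  haveI hBn := adInf_normal R hR B
  set D := adD R k (A ∪ B) with hD
  have key1 : ⁅adInf R B, adD R k A⁆ ≤ D := comm_adInf_adD_le R hR hk0 B A
  have key2 : ⁅adInf R A, adD R k B⁆ ≤ D := by
    have h := comm_adInf_adD_le R hR hk0 A B
    rwa [Finset.union_comm] at h
  have coe_comm : ∀ a b : F, ((⁅a, b⁆ : F) : F ⧸ D) = ⁅(a : F ⧸ D), (b : F ⧸ D)⁆ :=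
    fun a b => map_commutatorElement (QuotientGroup.mk' D) a b
  have C1 : ∀ a ∈ adD R k A, ∀ b ∈ adInf R B, Commute ((a : F ⧸ D)) ((b : F ⧸ D)) := by
    intro a ha b hb
    have hmem : ⁅b, a⁆ ∈ D := Subgroup.commutator_le.mp key1 b hb a ha
    have h1 : ((⁅b, a⁆ : F) : F ⧸ D) = 1 := (QuotientGroup.eq_one_iff _).mpr hmem
    rw [coe_comm] at h1
    exact (commutatorElement_eq_one_iff_commute.mp h1).symm
  have C2 : ∀ b ∈ adD R k B, ∀ a ∈ adInf R A, Commute ((b : F ⧸ D)) ((a : F ⧸ D)) := by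
    intro b hb a ha
    have hmem : ⁅a, b⁆ ∈ D := Subgroup.commutator_le.mp key2 a ha b hb
    have h1 : ((⁅a, b⁆ : F) : F ⧸ D) = 1 := (QuotientGroup.eq_one_iff _).mpr hmem
    rw [coe_comm] at h1
    exact (commutatorElement_eq_one_iff_commute.mp h1).symm
  have hxy'B : ⁅x', y⁆ ∈ adInf R B := by
    have hrw : ⁅x', y⁆ = (x' * y * x'⁻¹) * y⁻¹ := by
      simp only [commutatorElement_def]
    rw [hrw]
    exact mul_mem (hBn.conj_mem y hy x') (inv_mem hy)
  have hx'y'A : ⁅x', y'⁆ ∈ adInf R A := by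
    have hrw : ⁅x', y'⁆ = x' * (y' * x'⁻¹ * y'⁻¹) := by
      simp only [commutatorElement_def]; group
    rw [hrw]
    exact mul_mem hx' (hAn.conj_mem _ (inv_mem hx') y')
  have c1 : Commute ((x * x'⁻¹ : F) : F ⧸ D) ((y : F) : F ⧸ D) := C1 _ hd _ hy
  have c2 : Commute ((x * x'⁻¹ : F) : F ⧸ D) ((⁅x', y⁆ : F) : F ⧸ D) := C1 _ hd _ hxy'B
  have c3 : Commute ((y * y'⁻¹ : F) : F ⧸ D) ((x' : F) : F ⧸ D) := C2 _ he _ hx'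
  have c4 : Commute ((y * y'⁻¹ : F) : F ⧸ D) ((⁅x', y'⁆ : F) : F ⧸ D) := C2 _ he _ hx'y'A
  have hx2 : ((x : F) : F ⧸ D) = ((x * x'⁻¹ : F) : F ⧸ D) * ((x' : F) : F ⧸ D) := by
    rw [← QuotientGroup.mk_mul]
    congr 1
    group
  have hy2 : ((y : F) : F ⧸ D) = ((y * y'⁻¹ : F) : F ⧸ D) * ((y' : F) : F ⧸ D) := by
    rw [← QuotientGroup.mk_mul]
    congr 1
    group
  have hQ : ((⁅x, y⁆ : F) : F ⧸ D) = ((⁅x', y'⁆ : F) : F ⧸ D) := by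
    rw [coe_comm, coe_comm]
    calc ⁅((x : F) : F ⧸ D), ((y : F) : F ⧸ D)⁆
        = ⁅((x * x'⁻¹ : F) : F ⧸ D) * ((x' : F) : F ⧸ D), ((y : F) : F ⧸ D)⁆ := by
          rw [← hx2]
      _ = ((x * x'⁻¹ : F) : F ⧸ D) * ⁅((x' : F) : F ⧸ D), ((y : F) : F ⧸ D)⁆ *
            ((x * x'⁻¹ : F) : F ⧸ D)⁻¹ := comm_aux1 _ _ _ c1
      _ = ⁅((x' : F) : F ⧸ D), ((y : F) : F ⧸ D)⁆ := by
          refine conj_eq_self' _ _ ?_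
          rw [← coe_comm]
          exact c2
      _ = ⁅((x' : F) : F ⧸ D), ((y * y'⁻¹ : F) : F ⧸ D) * ((y' : F) : F ⧸ D)⁆ := by
          rw [← hy2]
      _ = ((y * y'⁻¹ : F) : F ⧸ D) * ⁅((x' : F) : F ⧸ D), ((y' : F) : F ⧸ D)⁆ *
            ((y * y'⁻¹ : F) : F ⧸ D)⁻¹ := comm_aux2 _ _ _ c3
      _ = ⁅((x' : F) : F ⧸ D), ((y' : F) : F ⧸ D)⁆ := by
          refine conj_eq_self' _ _ ?_
          rw [← coe_comm]
          exact c4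
  rw [← QuotientGroup.eq_one_iff (⁅x, y⁆ * ⁅x', y'⁆⁻¹)]
  rw [QuotientGroup.mk_mul, QuotientGroup.mk_inv, hQ, mul_inv_cancel]

end Main
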